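/- arXiv:2602.23059 — 2 statements merged into one kernel-verified Lean document; each statement's English description precedes it below -/
import Mathlib

section
/- Let π ∈ ℝⁿ be a positive probability vector, let M ∈ {0,1}^{n×n} be irreducible, symmetric with M_{ii} = 1 for all i, let K ∈ ℝ^{n²×n²} be the commutation matrix, let s_M be the number of ones in M, let y_M = (s_M − n)/2 + n, and let Π ∈ ℝ^{n²×y_M} be the upper-triangular selection operator determined by M. Then the matrix (D_π̂ ⊗ D_π̂⁻¹)(I + K)Π ∈ ℝ^{n²×y_M} has full column rank y_M; equivalently, the linear map y ↦ (D_π̂ ⊗ D_π̂⁻¹)(I + K)Π y is injective on ℝ^{y_M}. -/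
open Matrix BigOperators
open scoped Classical

/-- Index set for the upper-triangular nonzero positions of the pattern `M`
(including the diagonal); it enumerates `Ω_triu(M)` and has cardinality `y_M`. -/
def triuIdx (n : ℕ) (M : Matrix (Fin n) (Fin n) ℝ) : Type :=
  {p : Fin n × Fin n // p.1 ≤ p.2 ∧ M p.1 p.2 = 1}

noncomputable instance (n : ℕ) (M : Matrix (Fin n) (Fin n) ℝ) : Fintype (triuIdx n M) :=
  Subtype.fintype _

/-- The upper-triangular selection operator `Π` determined by `M`: the row indexed by
the vec-position `(j, i)` of entry `(i,j)` has entry `1` in column `k = (i,j)` when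
`i < j`, entry `1/2` when `i = j`, and `0` otherwise. -/
noncomputable def selOp (n : ℕ) (M : Matrix (Fin n) (Fin n) ℝ) :
    Matrix (Fin n × Fin n) (triuIdx n M) ℝ :=
  fun r k =>
    if r.2 = k.1.1 ∧ r.1 = k.1.2 then (if k.1.1 = k.1.2 then 1 / 2 else 1) else 0

/-- For a positive probability vector `π` and an irreducible symmetric
pattern `M` with unit diagonal, the matrix `(D_π̂ ⊗ D_π̂⁻¹)(I + K)Π` has full column
rank `y_M`; equivalently `y ↦ (D_π̂ ⊗ D_π̂⁻¹)(I + K)Π y` is injective. -/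
theorem selection_operator_full_column_rank
    (n : ℕ) (piv : Fin n → ℝ)
    (hpos : ∀ i, 0 < piv i) (hsum : ∑ i, piv i = 1)
    (M : Matrix (Fin n) (Fin n) ℝ)
    (hM01 : ∀ i j, M i j = 0 ∨ M i j = 1)
    (hMirr : ∀ i j, ∃ k : ℕ, 0 < (M ^ k) i j)
    (hMsymm : M.IsSymm)
    (hMdiag : ∀ i, M i i = 1)
    (K : Matrix (Fin n × Fin n) (Fin n × Fin n) ℝ)
    (hK : ∀ Y : Matrix (Fin n) (Fin n) ℝ,
      K.mulVec (fun p => Y p.2 p.1) = (fun p => Yᵀ p.2 p.1)) :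
    (Matrix.kroneckerMap (· * ·)
        (Matrix.diagonal fun i => Real.sqrt (piv i))
        (Matrix.diagonal fun i => (Real.sqrt (piv i))⁻¹)
      * (1 + K) * selOp n M).rank = Fintype.card (triuIdx n M) ∧
    Function.Injective (fun y : triuIdx n M → ℝ =>
      (Matrix.kroneckerMap (· * ·)
          (Matrix.diagonal fun i => Real.sqrt (piv i))
          (Matrix.diagonal fun i => (Real.sqrt (piv i))⁻¹)
        * (1 + K) * selOp n M).mulVec y) := by
  set D : Matrix (Fin n × Fin n) (Fin n × Fin n) ℝ :=
    Matrix.kroneckerMap (· * ·) (Matrix.diagonal fun i => Real.sqrt (piv i))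
      (Matrix.diagonal fun i => (Real.sqrt (piv i))⁻¹) with hD
  have hDdiag : D = Matrix.diagonal
      (fun p : Fin n × Fin n => Real.sqrt (piv p.1) * (Real.sqrt (piv p.2))⁻¹) := by
    rw [hD]; exact Matrix.diagonal_kronecker_diagonal _ _
  have hKswap : ∀ w : Fin n × Fin n → ℝ, K.mulVec w = fun p => w (p.2, p.1) := by
    intro w
    have h := hK (fun i j => w (j, i))
    convert h using 2
    rfl
  have hker : ∀ y : triuIdx n M → ℝ,
      (D * (1 + K) * selOp n M).mulVec y = 0 → y = 0 := by
    intro y hy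
    set w := (selOp n M).mulVec y with hw
    have h1 : D.mulVec ((1 + K).mulVec w) = 0 := by
      rw [hw, Matrix.mulVec_mulVec, Matrix.mulVec_mulVec]; exact hy
    have hwadd : ∀ p : Fin n × Fin n, w p + w (p.2, p.1) = 0 := by
      intro p
      have h2 := congrFun h1 p
      rw [hDdiag, Matrix.mulVec_diagonal] at h2
      have hne : Real.sqrt (piv p.1) * (Real.sqrt (piv p.2))⁻¹ ≠ 0 := by
        have h1' := Real.sqrt_pos.mpr (hpos p.1)
        have h2' := Real.sqrt_pos.mpr (hpos p.2)
        positivity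
      have h3 : (1 + K).mulVec w p = 0 := by
        rcases mul_eq_zero.mp h2 with h | h
        · exact absurd h hne
        · exact h
      rw [Matrix.add_mulVec, Matrix.one_mulVec, hKswap] at h3
      exact h3
    funext k
    obtain ⟨⟨i, j⟩, hij, hMij⟩ := k
    set k0 : triuIdx n M := ⟨(i, j), hij, hMij⟩ with hk0
    have hwji : w (j, i) = (if i = j then 1 / 2 else 1) * y k0 := by
      rw [hw]
      show ∑ k', selOp n M (j, i) k' * y k' = _
      rw [Finset.sum_eq_single k0]
      · simp [selOp, hk0]
      · intro k' _ hk'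
        have : ¬ (i = k'.1.1 ∧ j = k'.1.2) := by
          rintro ⟨h1', h2'⟩
          apply hk'
          apply Subtype.ext
          exact Prod.ext h1'.symm h2'.symm
        simp [selOp, this]
      · intro h; exact absurd (Finset.mem_univ _) h
    rcases eq_or_lt_of_le hij with heq | hlt
    · -- diagonal case: i = j
      have heq' : i = j := heq
      subst heq'
      have h := hwadd (i, i)
      simp only at h
      have hwii : w (i, i) = (1 / 2 : ℝ) * y k0 := by simpa using hwji
      rw [hwii] at h
      have : y k0 = 0 := by linarith
      simpa [hk0] using this
    · -- off-diagonal case: i < j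
      have hwij : w (i, j) = 0 := by
        rw [hw]
        show ∑ k', selOp n M (i, j) k' * y k' = 0
        apply Finset.sum_eq_zero
        intro k' _
        have : ¬ (j = k'.1.1 ∧ i = k'.1.2) := by
          rintro ⟨h1', h2'⟩
          have := k'.2.1
          rw [← h1', ← h2'] at this
          exact absurd this (not_le.mpr hlt)
        simp [selOp, this]
      have h := hwadd (j, i)
      simp only at h
      rw [hwji, hwij, if_neg (ne_of_lt hlt)] at h
      have : y k0 = 0 := by linarith
      simpa [hk0] using this
  have hinj : Function.Injective (fun y : triuIdx n M → ℝ =>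
      (D * (1 + K) * selOp n M).mulVec y) := by
    intro y1 y2 h
    dsimp only at h
    have h0 : (D * (1 + K) * selOp n M).mulVec (y1 - y2) = 0 := by
      rw [Matrix.mulVec_sub, h, sub_self]
    exact sub_eq_zero.mp (hker _ h0)
  refine ⟨?_, hinj⟩
  have hinj' : Function.Injective (D * (1 + K) * selOp n M).mulVecLin := by
    intro y1 y2 h
    exact hinj h
  rw [Matrix.rank, LinearMap.finrank_range_of_inj hinj', Module.finrank_pi]
end

section
/- Let π ∈ ℝⁿ be a positive probability vector, let M ∈ {0,1}^{n×n} be irreducible, symmetric with M_{ii} = 1 for all i, let K be the commutation matrix, and let Π ∈ ℝ^{n²×y_M} be the upper-triangular selection operator determined by M, with y_M = (s_M − n)/2 + n. Then the matrix Q = ((D_π̂ ⊗ D_π̂⁻¹)(I + K)Π)ᵀ (D_π̂ ⊗ D_π̂⁻¹)(I + K)Π ∈ ℝ^{y_M×y_M} is symmetric positive definite; consequently the quadratic objective y ↦ ½ yᵀ Q y + cᵀ y is strongly convex on ℝ^{y_M} for any c ∈ ℝ^{y_M}. -/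
open Matrix BigOperators
open scoped Classical

lemma posDef_transpose_mul_self_of_ker {p ι : Type*} [Fintype p] [Fintype ι]
    (A : Matrix p ι ℝ) (h : ∀ y, A.mulVec y = 0 → y = 0) : (Aᵀ * A).PosDef := by
  refine posDef_iff_dotProduct_mulVec.mpr ⟨?_, ?_⟩
  · show (Aᵀ * A)ᴴ = Aᵀ * A
    ext i j
    simp [Matrix.mul_apply, mul_comm]
  · intro x hx
    have hAx : A.mulVec x ≠ 0 := fun h0 => hx (h x h0)
    have heq : star x ⬝ᵥ (Aᵀ * A) *ᵥ x = (A *ᵥ x) ⬝ᵥ (A *ᵥ x) := by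
      rw [star_trivial, ← mulVec_mulVec, dotProduct_mulVec, vecMul_transpose]
    rw [heq]
    have h1 : 0 ≤ (A *ᵥ x) ⬝ᵥ (A *ᵥ x) :=
      Finset.sum_nonneg fun i _ => mul_self_nonneg _
    rcases h1.lt_or_eq with h2 | h2
    · exact h2
    · exact absurd (dotProduct_self_eq_zero.mp h2.symm) hAx

lemma posDef_lower_bound {ι : Type*} [Fintype ι] (Q : Matrix ι ι ℝ) (hQ : Q.PosDef) :
    ∃ m : ℝ, 0 < m ∧ ∀ v : ι → ℝ, m * ∑ k, v k ^ 2 ≤ v ⬝ᵥ Q.mulVec v := by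
  by_cases hι : Nonempty ι
  · obtain ⟨i0⟩ := hι
    let f : EuclideanSpace ℝ ι → ℝ := fun v => (v : ι → ℝ) ⬝ᵥ Q.mulVec v
    have h1 : ∀ i : ι, Continuous fun v : EuclideanSpace ℝ ι => v i :=
      fun i => (EuclideanSpace.proj i).continuous
    have hf : Continuous f := by
      unfold f
      simp only [dotProduct, mulVec]
      exact continuous_finset_sum _ fun i _ =>
        (h1 i).mul (continuous_finset_sum _ fun j _ => continuous_const.mul (h1 j))
    have he : (EuclideanSpace.single i0 (1:ℝ)) ∈ Metric.sphere (0 : EuclideanSpace ℝ ι) 1 := by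
      rw [mem_sphere_zero_iff_norm, EuclideanSpace.norm_single]
      norm_num
    obtain ⟨u, huS, hmin⟩ := (isCompact_sphere (0 : EuclideanSpace ℝ ι) 1).exists_isMinOn
      ⟨_, he⟩ hf.continuousOn
    have hu0 : (u : ι → ℝ) ≠ 0 := by
      intro h0
      have : ‖u‖ = 1 := mem_sphere_zero_iff_norm.mp huS
      rw [show u = 0 from (WithLp.ofLp_eq_zero 2).mp h0] at this
      simp at this
    have hm : 0 < f u := by
      have := hQ.dotProduct_mulVec_pos hu0
      rwa [star_trivial] at this
    refine ⟨f u, hm, fun v => ?_⟩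
    by_cases hv : v = 0
    · simp [hv]
    · set V : EuclideanSpace ℝ ι := WithLp.toLp 2 v with hV
      have hr : 0 < ‖V‖ := norm_pos_iff.mpr ((WithLp.toLp_eq_zero 2).not.mpr hv)
      set r := ‖V‖ with hrdef
      have hu' : (r⁻¹ • V) ∈ Metric.sphere (0 : EuclideanSpace ℝ ι) 1 := by
        rw [mem_sphere_zero_iff_norm, norm_smul, norm_inv, norm_norm]
        exact inv_mul_cancel₀ hr.ne'
      have h2 := hmin hu'
      have h3 : f (r⁻¹ • V) = r⁻¹ * (r⁻¹ * (V ⬝ᵥ Q.mulVec V)) := by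
        show ((r⁻¹ • v : ι → ℝ)) ⬝ᵥ Q.mulVec (r⁻¹ • v) = _
        rw [smul_dotProduct, mulVec_smul, dotProduct_smul, smul_eq_mul, smul_eq_mul]
      have h4 : ∑ k, v k ^ 2 = r ^ 2 := by
        rw [hrdef, EuclideanSpace.norm_eq, Real.sq_sqrt (Finset.sum_nonneg fun i _ => sq_nonneg _)]
        simp [sq_abs]
        rfl
      rw [h4]
      have h2' : f u ≤ f (r⁻¹ • V) := h2
      rw [h3] at h2'
      have hinv : r⁻¹ * r = 1 := inv_mul_cancel₀ hr.ne'
      have h5 : r⁻¹ * (r⁻¹ * (V ⬝ᵥ Q.mulVec V)) * r ^ 2 = V ⬝ᵥ Q.mulVec V := by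
        have hr0 : r ≠ 0 := hr.ne'
        field_simp
      linarith [mul_le_mul_of_nonneg_right h2' (sq_nonneg r), h5]
  · refine ⟨1, one_pos, fun v => ?_⟩
    have : IsEmpty ι := not_nonempty_iff.mp hι
    simp [dotProduct]

/-- The vectorization operator: stacks the columns of a matrix. -/
def vecOp {n : ℕ} (Y : Matrix (Fin n) (Fin n) ℝ) : Fin n × Fin n → ℝ :=
  fun p => Y p.2 p.1

/-- The Hessian `Q = ((D_π̂ ⊗ D_π̂⁻¹)(I+K)Π)ᵀ (D_π̂ ⊗ D_π̂⁻¹)(I+K)Π`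
is symmetric positive definite; consequently the quadratic objective
`y ↦ ½ yᵀQy + cᵀy` is strongly convex for every `c`. -/
theorem qp_hessian_positive_definite
    (n : ℕ) (piv : Fin n → ℝ)
    (hpos : ∀ i, 0 < piv i) (hsum : ∑ i, piv i = 1)
    (M : Matrix (Fin n) (Fin n) ℝ)
    (hM01 : ∀ i j, M i j = 0 ∨ M i j = 1)
    (hMirr : ∀ i j, ∃ k : ℕ, 0 < (M ^ k) i j)
    (hMsymm : M.IsSymm)
    (hMdiag : ∀ i, M i i = 1)
    (K : Matrix (Fin n × Fin n) (Fin n × Fin n) ℝ)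
    (hK : ∀ Z : Matrix (Fin n) (Fin n) ℝ, K.mulVec (vecOp Z) = vecOp Zᵀ)
    (A : Matrix (Fin n × Fin n) (triuIdx n M) ℝ)
    (hA : A = Matrix.kroneckerMap (· * ·)
        (Matrix.diagonal fun i => Real.sqrt (piv i))
        (Matrix.diagonal fun i => (Real.sqrt (piv i))⁻¹) * (1 + K) * selOp n M)
    (Q : Matrix (triuIdx n M) (triuIdx n M) ℝ)
    (hQ : Q = Aᵀ * A) :
    Q.PosDef ∧
    ∃ m : ℝ, 0 < m ∧ ∀ c x z : triuIdx n M → ℝ, ∀ t ∈ Set.Icc (0 : ℝ) 1,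
      (1 / 2) * ((t • x + (1 - t) • z) ⬝ᵥ Q.mulVec (t • x + (1 - t) • z)) +
          c ⬝ᵥ (t • x + (1 - t) • z)
        ≤ t * ((1 / 2) * (x ⬝ᵥ Q.mulVec x) + c ⬝ᵥ x) +
            (1 - t) * ((1 / 2) * (z ⬝ᵥ Q.mulVec z) + c ⬝ᵥ z) -
            m / 2 * (t * (1 - t)) * ∑ k, (x k - z k) ^ 2 := by
  -- diagonal entries of the Kronecker factor are nonzero
  have hDne : ∀ p : Fin n × Fin n,
      Real.sqrt (piv p.1) * (Real.sqrt (piv p.2))⁻¹ ≠ 0 := by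
    intro p
    have h1 : Real.sqrt (piv p.1) ≠ 0 := (Real.sqrt_pos.mpr (hpos p.1)).ne'
    have h2 : (Real.sqrt (piv p.2))⁻¹ ≠ 0 :=
      inv_ne_zero (Real.sqrt_pos.mpr (hpos p.2)).ne'
    exact mul_ne_zero h1 h2
  -- action of K on arbitrary vectors
  have hKw : ∀ (w : Fin n × Fin n → ℝ) (p : Fin n × Fin n),
      (K.mulVec w) p = w (p.2, p.1) := by
    intro w p
    have hw : vecOp (Matrix.of fun i j => w (j, i)) = w := by
      funext q; rfl
    have h := hK (Matrix.of fun i j => w (j, i))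
    rw [hw] at h
    rw [h]
    rfl
  -- action of selOp at a flipped upper-triangular index
  have hsel : ∀ (y : triuIdx n M → ℝ) (k : triuIdx n M),
      (Matrix.mulVec (selOp n M) y) (k.1.2, k.1.1)
        = (if k.1.1 = k.1.2 then (1:ℝ)/2 else 1) * y k := by
    intro y k
    show (∑ k' : triuIdx n M, selOp n M (k.1.2, k.1.1) k' * y k') = _
    rw [Finset.sum_eq_single k]
    · unfold selOp
      simp
    · intro b _ hb
      have hcond : ¬(((k.1.2, k.1.1) : Fin n × Fin n).2 = b.1.1 ∧
          ((k.1.2, k.1.1) : Fin n × Fin n).1 = b.1.2) := by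
        rintro ⟨h1, h2⟩
        apply hb
        apply Subtype.ext
        exact Prod.ext h1.symm h2.symm
      simp [selOp, hcond]
    · intro h; exact absurd (Finset.mem_univ k) h
  -- selOp vanishes at strictly-upper positions
  have hsel0 : ∀ (y : triuIdx n M → ℝ) (k : triuIdx n M), k.1.1 ≠ k.1.2 →
      (Matrix.mulVec (selOp n M) y) (k.1.1, k.1.2) = 0 := by
    intro y k hk
    apply Finset.sum_eq_zero
    intro b _
    have hcond : ¬(((k.1.1, k.1.2) : Fin n × Fin n).2 = b.1.1 ∧
        ((k.1.1, k.1.2) : Fin n × Fin n).1 = b.1.2) := by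
      rintro ⟨h1, h2⟩
      have hb : b.1.1 ≤ b.1.2 := b.2.1
      rw [← h1, ← h2] at hb
      exact hk (le_antisymm k.2.1 hb)
    simp [selOp, hcond]
  -- injectivity of A
  have hinj : ∀ y : triuIdx n M → ℝ, A.mulVec y = 0 → y = 0 := by
    intro y hy
    set w : Fin n × Fin n → ℝ := Matrix.mulVec (selOp n M) y with hwdef
    have h1 : A.mulVec y = Matrix.mulVec (Matrix.diagonal fun p : Fin n × Fin n =>
        Real.sqrt (piv p.1) * (Real.sqrt (piv p.2))⁻¹)
        (Matrix.mulVec (1 + K) w) := by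
      rw [hA, ← Matrix.mulVec_mulVec, ← Matrix.mulVec_mulVec,
        Matrix.diagonal_kronecker_diagonal]
    have hv : ∀ p : Fin n × Fin n, (Matrix.mulVec (1 + K) w) p = 0 := by
      intro p
      have := congrFun hy p
      rw [h1] at this
      have h2 : (Matrix.mulVec (Matrix.diagonal fun p : Fin n × Fin n =>
          Real.sqrt (piv p.1) * (Real.sqrt (piv p.2))⁻¹)
          (Matrix.mulVec (1 + K) w)) p
          = (Real.sqrt (piv p.1) * (Real.sqrt (piv p.2))⁻¹) *
            (Matrix.mulVec (1 + K) w) p := Matrix.mulVec_diagonal _ _ _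
      rw [h2] at this
      exact (mul_eq_zero.mp this).resolve_left (hDne p)
    funext k
    have h3 : (Matrix.mulVec (1 + K) w) (k.1.2, k.1.1)
        = w (k.1.2, k.1.1) + w (k.1.1, k.1.2) := by
      rw [Matrix.add_mulVec, Matrix.one_mulVec]
      simp only [Pi.add_apply]
      rw [hKw w (k.1.2, k.1.1)]
    have h4 := hv (k.1.2, k.1.1)
    rw [h3] at h4
    by_cases hk : k.1.1 = k.1.2
    · have e1 : w (k.1.2, k.1.1) = (1/2 : ℝ) * y k := by
        rw [hwdef, hsel y k, if_pos hk]
      have e2 : ((k.1.1 : Fin n), k.1.2) = ((k.1.2 : Fin n), k.1.1) := by rw [hk]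
      have e3 : w (k.1.1, k.1.2) = (1/2 : ℝ) * y k := by rw [e2, e1]
      rw [e1, e3] at h4
      show y k = 0
      linarith
    · have e1 : w (k.1.2, k.1.1) = y k := by
        rw [hwdef, hsel y k, if_neg hk, one_mul]
      have e2 : w (k.1.1, k.1.2) = 0 := hsel0 y k hk
      rw [e1, e2] at h4
      show y k = 0
      linarith
  have hQpd : Q.PosDef := by
    rw [hQ]; exact posDef_transpose_mul_self_of_ker A hinj
  obtain ⟨m, hm, hbound⟩ := posDef_lower_bound Q hQpd
  refine ⟨hQpd, m, hm, ?_⟩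
  intro c x z t ht
  obtain ⟨ht0, ht1⟩ := ht
  have hQsym : ∀ u w : triuIdx n M → ℝ, u ⬝ᵥ Q.mulVec w = w ⬝ᵥ Q.mulVec u := by
    have e : ∀ a b : triuIdx n M → ℝ, a ⬝ᵥ Q.mulVec b = (A.mulVec a) ⬝ᵥ (A.mulVec b) := by
      intro a b
      rw [hQ, ← Matrix.mulVec_mulVec, Matrix.dotProduct_mulVec, Matrix.vecMul_transpose]
    intro u w
    rw [e, e, dotProduct_comm]
  have hexp : (t • x + (1 - t) • z) ⬝ᵥ Q.mulVec (t • x + (1 - t) • z)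
      = t * t * (x ⬝ᵥ Q.mulVec x) + 2 * (t * (1 - t)) * (x ⬝ᵥ Q.mulVec z)
        + (1 - t) * (1 - t) * (z ⬝ᵥ Q.mulVec z) := by
    simp only [Matrix.mulVec_add, Matrix.mulVec_smul, dotProduct_add, add_dotProduct,
      smul_dotProduct, dotProduct_smul, smul_eq_mul]
    rw [hQsym z x]
    ring
  have hdexp : (x - z) ⬝ᵥ Q.mulVec (x - z)
      = (x ⬝ᵥ Q.mulVec x) - 2 * (x ⬝ᵥ Q.mulVec z) + (z ⬝ᵥ Q.mulVec z) := by
    simp only [Matrix.mulVec_sub, dotProduct_sub, sub_dotProduct]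
    rw [hQsym z x]
    ring
  have hdiff : m * ∑ k, (x k - z k) ^ 2
      ≤ (x ⬝ᵥ Q.mulVec x) - 2 * (x ⬝ᵥ Q.mulVec z) + (z ⬝ᵥ Q.mulVec z) := by
    have := hbound (x - z)
    rw [hdexp] at this
    simpa using this
  have hc : c ⬝ᵥ (t • x + (1 - t) • z) = t * (c ⬝ᵥ x) + (1 - t) * (c ⬝ᵥ z) := by
    simp only [dotProduct_add, dotProduct_smul, smul_eq_mul]
  rw [hexp, hc]
  have hts : 0 ≤ t * (1 - t) := mul_nonneg ht0 (by linarith)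
  nlinarith [mul_nonneg hts (sub_nonneg.mpr hdiff)]
end
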